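/- Let $a \in H^{s_1 + 1}(\mathbb{T}_1)$ and $u \in H^{s_2}(\mathbb{T}_1)$ with $s_1, s_2 \geq 0$, and let $R(a, u)(x) = \sum_{\eta, \xi \in \mathbb{Z}} \omega(\eta, \xi) \hat{a}(\eta) \hat{u}(\xi) e^{2\pi i (\eta + \xi) x}$ where $\omega : \mathbb{Z}^2 \to \mathbb{R}$ is bounded by $1$ and supported in $\{(\eta, \xi) : \varepsilon' \langle \xi \rangle < |\eta| < \langle \xi \rangle / \varepsilon'\} \cup \{(0,0)\}$ for some $\varepsilon' \in (0,1)$. Then $R(a, u) \in H^{s_1 + s_2}(\mathbb{T}_1)$ and $\|R(a, u)\|_{s_1 + s_2} \leq C(s_1, s_2, \varepsilon') \|a\|_{s_1 + 1} \|u\|_{s_2}$. -/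

import Mathlib

open scoped ENNReal

namespace ParaprodAux

lemma mul_le_sq_add_sq (x y : ℝ≥0∞) : x * y ≤ x ^ 2 + y ^ 2 := by
  rcases le_total x y with h | h
  · calc x * y ≤ y * y := by gcongr
      _ = y ^ 2 := (sq y).symm
      _ ≤ x ^ 2 + y ^ 2 := le_add_self
  · calc x * y ≤ x * x := by gcongr
      _ = x ^ 2 := (sq x).symm
      _ ≤ x ^ 2 + y ^ 2 := le_self_add

lemma tsum_sq_expand (x : ℤ → ℝ≥0∞) :
    (∑' i, x i) ^ 2 = ∑' (i : ℤ), ∑' (j : ℤ), x i * x j := by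
  rw [sq, ← ENNReal.tsum_mul_right]
  exact tsum_congr fun i => ENNReal.tsum_mul_left.symm

lemma cs (a b : ℤ → ℝ≥0∞) :
    (∑' i, a i * b i) ^ 2 ≤ 2 * ((∑' i, a i ^ 2) * (∑' i, b i ^ 2)) := by
  rw [tsum_sq_expand]
  have h1 : ∀ i j : ℤ, (a i * b i) * (a j * b j) ≤ a i ^ 2 * b j ^ 2 + a j ^ 2 * b i ^ 2 := by
    intro i j
    have e : (a i * b i) * (a j * b j) = (a i * b j) * (a j * b i) := by ring
    rw [e]
    calc (a i * b j) * (a j * b i) ≤ (a i * b j) ^ 2 + (a j * b i) ^ 2 := mul_le_sq_add_sq _ _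
      _ = a i ^ 2 * b j ^ 2 + a j ^ 2 * b i ^ 2 := by ring
  calc ∑' (i : ℤ), ∑' (j : ℤ), (a i * b i) * (a j * b j)
      ≤ ∑' (i : ℤ), ∑' (j : ℤ), (a i ^ 2 * b j ^ 2 + a j ^ 2 * b i ^ 2) :=
        ENNReal.tsum_le_tsum fun i => ENNReal.tsum_le_tsum fun j => h1 i j
    _ = (∑' (i : ℤ), ∑' (j : ℤ), a i ^ 2 * b j ^ 2) +
        ∑' (i : ℤ), ∑' (j : ℤ), a j ^ 2 * b i ^ 2 := by
        rw [← ENNReal.tsum_add]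
        exact tsum_congr fun i => ENNReal.tsum_add
    _ = (∑' i, a i ^ 2) * (∑' i, b i ^ 2) + (∑' i, b i ^ 2) * (∑' i, a i ^ 2) := by
        congr 1
        · calc ∑' (i : ℤ), ∑' (j : ℤ), a i ^ 2 * b j ^ 2
              = ∑' (i : ℤ), a i ^ 2 * ∑' (j : ℤ), b j ^ 2 :=
                tsum_congr fun i => ENNReal.tsum_mul_left
            _ = (∑' i, a i ^ 2) * (∑' i, b i ^ 2) := ENNReal.tsum_mul_right
        · calc ∑' (i : ℤ), ∑' (j : ℤ), a j ^ 2 * b i ^ 2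
              = ∑' (j : ℤ), ∑' (i : ℤ), a j ^ 2 * b i ^ 2 := ENNReal.tsum_comm
            _ = ∑' (j : ℤ), a j ^ 2 * ∑' (i : ℤ), b i ^ 2 :=
                tsum_congr fun j => ENNReal.tsum_mul_left
            _ = (∑' i, b i ^ 2) * (∑' i, a i ^ 2) := by
                rw [ENNReal.tsum_mul_right]; exact mul_comm _ _
    _ = 2 * ((∑' i, a i ^ 2) * (∑' i, b i ^ 2)) := by ring

lemma conv (φ γ : ℤ → ℝ≥0∞) :
    ∑' (n : ℤ), (∑' (η : ℤ), φ η * γ (n - η)) ^ 2 ≤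
      2 * ((∑' η, φ η) ^ 2 * (∑' ξ, γ ξ ^ 2)) := by
  have key : ∀ n : ℤ, (∑' (η : ℤ), φ η * γ (n - η)) ^ 2 ≤
      2 * ((∑' η, φ η) * ∑' (η : ℤ), φ η * γ (n - η) ^ 2) := by
    intro n
    rw [tsum_sq_expand]
    have h1 : ∀ i j : ℤ, (φ i * γ (n - i)) * (φ j * γ (n - j)) ≤
        φ i * φ j * (γ (n - i) ^ 2 + γ (n - j) ^ 2) := by
      intro i j
      calc (φ i * γ (n - i)) * (φ j * γ (n - j))
          = φ i * φ j * (γ (n - i) * γ (n - j)) := by ring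
        _ ≤ φ i * φ j * (γ (n - i) ^ 2 + γ (n - j) ^ 2) := by
            gcongr
            exact mul_le_sq_add_sq _ _
    calc ∑' (i : ℤ), ∑' (j : ℤ), (φ i * γ (n - i)) * (φ j * γ (n - j))
        ≤ ∑' (i : ℤ), ∑' (j : ℤ), φ i * φ j * (γ (n - i) ^ 2 + γ (n - j) ^ 2) :=
          ENNReal.tsum_le_tsum fun i => ENNReal.tsum_le_tsum fun j => h1 i j
      _ = ∑' (i : ℤ), (φ i * γ (n - i) ^ 2 * (∑' η, φ η) +
            φ i * ∑' (j : ℤ), φ j * γ (n - j) ^ 2) := by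
          refine tsum_congr fun i => ?_
          calc ∑' (j : ℤ), φ i * φ j * (γ (n - i) ^ 2 + γ (n - j) ^ 2)
              = ∑' (j : ℤ), ((φ i * γ (n - i) ^ 2) * φ j + φ i * (φ j * γ (n - j) ^ 2)) :=
                tsum_congr fun j => by ring
            _ = (∑' (j : ℤ), (φ i * γ (n - i) ^ 2) * φ j) +
                ∑' (j : ℤ), φ i * (φ j * γ (n - j) ^ 2) := ENNReal.tsum_add
            _ = φ i * γ (n - i) ^ 2 * (∑' η, φ η) + φ i * ∑' (j : ℤ), φ j * γ (n - j) ^ 2 := by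
                rw [ENNReal.tsum_mul_left, ENNReal.tsum_mul_left]
      _ = (∑' (i : ℤ), φ i * γ (n - i) ^ 2) * (∑' η, φ η) +
            (∑' η, φ η) * ∑' (j : ℤ), φ j * γ (n - j) ^ 2 := by
          rw [ENNReal.tsum_add, ENNReal.tsum_mul_right, ENNReal.tsum_mul_right]
      _ = 2 * ((∑' η, φ η) * ∑' (η : ℤ), φ η * γ (n - η) ^ 2) := by ring
  calc ∑' (n : ℤ), (∑' (η : ℤ), φ η * γ (n - η)) ^ 2
      ≤ ∑' (n : ℤ), 2 * ((∑' η, φ η) * ∑' (η : ℤ), φ η * γ (n - η) ^ 2) :=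
        ENNReal.tsum_le_tsum key
    _ = 2 * ((∑' η, φ η) * ∑' (n : ℤ), ∑' (η : ℤ), φ η * γ (n - η) ^ 2) := by
        rw [ENNReal.tsum_mul_left, ENNReal.tsum_mul_left]
    _ = 2 * ((∑' η, φ η) ^ 2 * (∑' ξ, γ ξ ^ 2)) := by
        rw [ENNReal.tsum_comm]
        congr 1
        have : ∀ η : ℤ, ∑' (n : ℤ), φ η * γ (n - η) ^ 2 = φ η * ∑' ξ, γ ξ ^ 2 := by
          intro η
          rw [ENNReal.tsum_mul_left]
          congr 1
          exact (Equiv.subRight η).tsum_eq fun m => γ m ^ 2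
        rw [tsum_congr this, ENNReal.tsum_mul_right, sq]
        ring

lemma summable_of_ofReal {f : ℤ → ℝ} (hf : ∀ n, 0 ≤ f n)
    (h : (∑' n, ENNReal.ofReal (f n)) ≠ ⊤) : Summable f := by
  have h2 : Summable (fun n => (f n).toNNReal) := by
    rw [← ENNReal.tsum_coe_ne_top_iff_summable]
    exact h
  exact (NNReal.summable_coe.mpr h2).congr fun n => Real.coe_toNNReal _ (hf n)

lemma rpow_two_mul {x : ℝ} (hx : 0 ≤ x) (t : ℝ) : x ^ (2 * t) = (x ^ t) ^ 2 := by
  rw [show (2 : ℝ) * t = t * 2 by ring, Real.rpow_mul hx, ← Real.rpow_natCast (x ^ t) 2]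
  norm_num

end ParaprodAux

/-- Smoothing property of the para-product remainder (Fourier side): if
`|ω| ≤ 1` and `ω` is supported in `{ε'⟨ξ⟩ < |η| < ⟨ξ⟩/ε'} ∪ {(0,0)}`, then the
remainder with Fourier coefficients `R̂(n) = ∑_{η+ξ=n} ω(η,ξ) â(η) û(ξ)` belongs
to `H^{s₁+s₂}` and `‖R(a,u)‖_{s₁+s₂} ≤ C(s₁,s₂,ε') ‖a‖_{s₁+1} ‖u‖_{s₂}`. -/
theorem paraproduct_remainder_estimate
    (s₁ s₂ ε' : ℝ) (hs₁ : 0 ≤ s₁) (hs₂ : 0 ≤ s₂) (hε'0 : 0 < ε') (hε'1 : ε' < 1) :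
    ∃ C : ℝ, 0 < C ∧
      ∀ (ahat uhat : ℤ → ℂ) (ω : ℤ × ℤ → ℝ),
        (∀ p : ℤ × ℤ, |ω p| ≤ 1) →
        (∀ η ξ : ℤ, ω (η, ξ) ≠ 0 → (η, ξ) = (0, 0) ∨
          (ε' * max 1 |(ξ : ℝ)| < |(η : ℝ)| ∧ |(η : ℝ)| < max 1 |(ξ : ℝ)| / ε')) →
        Summable (fun η : ℤ => (max 1 |(η : ℝ)|) ^ (2 * (s₁ + 1)) * ‖ahat η‖ ^ 2) →
        Summable (fun ξ : ℤ => (max 1 |(ξ : ℝ)|) ^ (2 * s₂) * ‖uhat ξ‖ ^ 2) →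
        Summable (fun n : ℤ => (max 1 |(n : ℝ)|) ^ (2 * (s₁ + s₂)) *
            ‖∑' η : ℤ, (ω (η, n - η) : ℂ) * ahat η * uhat (n - η)‖ ^ 2) ∧
          Real.sqrt (∑' n : ℤ, (max 1 |(n : ℝ)|) ^ (2 * (s₁ + s₂)) *
              ‖∑' η : ℤ, (ω (η, n - η) : ℂ) * ahat η * uhat (n - η)‖ ^ 2) ≤
            C * Real.sqrt (∑' η : ℤ, (max 1 |(η : ℝ)|) ^ (2 * (s₁ + 1)) * ‖ahat η‖ ^ 2) *
              Real.sqrt (∑' ξ : ℤ, (max 1 |(ξ : ℝ)|) ^ (2 * s₂) * ‖uhat ξ‖ ^ 2) := by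
  classical
  set b : ℤ → ℝ := fun n => max 1 |(n : ℝ)| with hb_def
  have hb1 : ∀ n : ℤ, (1 : ℝ) ≤ b n := fun n => le_max_left _ _
  have hb0 : ∀ n : ℤ, (0 : ℝ) < b n := fun n => lt_of_lt_of_le one_pos (hb1 n)
  -- summability of the inverse squares
  have hSsum : Summable (fun n : ℤ => (b n)⁻¹ ^ 2) := by
    have h1 : Summable (fun n : ℤ => 1 / (n : ℝ) ^ 2) :=
      Real.summable_one_div_int_pow.mpr one_lt_two
    have h2 : Summable (fun n : ℤ => if n = 0 then (1 : ℝ) else 0) :=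
      summable_of_ne_finset_zero (s := {0}) (fun n hn => if_neg (by simpa using hn))
    refine Summable.of_nonneg_of_le (fun n => sq_nonneg _) (fun n => ?_) (h1.add h2)
    by_cases hn : n = 0
    · subst hn; simp [hb_def]
    · have h3 : (1 : ℝ) ≤ |(n : ℝ)| := by
        rw [← Int.cast_abs]; exact_mod_cast Int.one_le_abs hn
      have hbn : b n = |(n : ℝ)| := max_eq_right h3
      rw [hbn, if_neg hn, add_zero, one_div, inv_pow, sq_abs]
  set S : ℝ := ∑' n : ℤ, (b n)⁻¹ ^ 2 with hS_def
  have hS1 : (1 : ℝ) ≤ S := by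
    have h0 := Summable.le_tsum hSsum 0 (fun j _ => sq_nonneg _)
    have hb00 : b (0 : ℤ) = 1 := by simp [hb_def]
    rw [hS_def]
    calc (1:ℝ) = (b (0:ℤ))⁻¹ ^ 2 := by rw [hb00]; norm_num
      _ ≤ _ := h0
  have hS0 : (0 : ℝ) ≤ S := le_trans zero_le_one hS1
  have h2ε : (1 : ℝ) ≤ 2 / ε' := by rw [le_div_iff₀ hε'0]; linarith
  have h2ε0 : (0 : ℝ) < 2 / ε' := by positivity
  set K : ℝ := (2 / ε') ^ (s₁ + s₂) with hK_def
  have hK1 : (1 : ℝ) ≤ K := Real.one_le_rpow h2ε (by linarith)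
  have hK0 : (0 : ℝ) < K := lt_of_lt_of_le one_pos hK1
  have hCpos : 0 < 2 * K * Real.sqrt S :=
    mul_pos (by linarith) (Real.sqrt_pos.mpr (lt_of_lt_of_le one_pos hS1))
  refine ⟨2 * K * Real.sqrt S, hCpos, ?_⟩
  intro ahat uhat ω hωle hωsupp hA hU
  set F : ℤ → ℝ := fun η => b η ^ (s₁ + 1) * ‖ahat η‖ with hF_def
  set G : ℤ → ℝ := fun ξ => b ξ ^ s₂ * ‖uhat ξ‖ with hG_def
  set f : ℤ → ℝ := fun η => b η ^ s₁ * ‖ahat η‖ with hf_def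
  have hfnn : ∀ η, 0 ≤ f η := fun η =>
    mul_nonneg (Real.rpow_nonneg (hb0 η).le _) (norm_nonneg _)
  have hGnn : ∀ ξ, 0 ≤ G ξ := fun ξ =>
    mul_nonneg (Real.rpow_nonneg (hb0 ξ).le _) (norm_nonneg _)
  have hFnn : ∀ η, 0 ≤ F η := fun η =>
    mul_nonneg (Real.rpow_nonneg (hb0 η).le _) (norm_nonneg _)
  have hFsq_eq : ∀ η : ℤ, b η ^ (2 * (s₁ + 1)) * ‖ahat η‖ ^ 2 = F η ^ 2 := fun η => by
    rw [hF_def, ParaprodAux.rpow_two_mul (hb0 η).le, mul_pow]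
  have hGsq_eq : ∀ ξ : ℤ, b ξ ^ (2 * s₂) * ‖uhat ξ‖ ^ 2 = G ξ ^ 2 := fun ξ => by
    rw [hG_def, ParaprodAux.rpow_two_mul (hb0 ξ).le, mul_pow]
  have hFsq : Summable (fun η => F η ^ 2) := hA.congr hFsq_eq
  have hGsq : Summable (fun ξ => G ξ ^ 2) := hU.congr hGsq_eq
  set NA : ℝ := ∑' η : ℤ, F η ^ 2 with hNA_def
  set NU : ℝ := ∑' ξ : ℤ, G ξ ^ 2 with hNU_def
  have hNA0 : 0 ≤ NA := tsum_nonneg fun _ => sq_nonneg _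
  have hNU0 : 0 ≤ NU := tsum_nonneg fun _ => sq_nonneg _
  set M : ℝ := Real.sqrt NU with hM_def
  have hGM : ∀ ξ, G ξ ≤ M := by
    intro ξ
    have h1 : G ξ ^ 2 ≤ NU := Summable.le_tsum hGsq ξ (fun j _ => sq_nonneg _)
    calc G ξ = Real.sqrt (G ξ ^ 2) := (Real.sqrt_sq (hGnn ξ)).symm
      _ ≤ M := Real.sqrt_le_sqrt h1
  have hf_eq : ∀ η, f η = (b η)⁻¹ * F η := by
    intro η
    show b η ^ s₁ * ‖ahat η‖ = (b η)⁻¹ * (b η ^ (s₁ + 1) * ‖ahat η‖)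
    have hne : b η ≠ 0 := (hb0 η).ne'
    rw [Real.rpow_add_one hne s₁]
    field_simp
  have hf_sum : Summable f := by
    refine Summable.of_nonneg_of_le hfnn (fun η => ?_) (hSsum.add hFsq)
    rw [hf_eq η]
    nlinarith [sq_nonneg ((b η)⁻¹ - F η), sq_nonneg ((b η)⁻¹ + F η)]
  have hnormterm : ∀ (w : ℝ) (x y : ℂ), ‖(w : ℂ) * x * y‖ = |w| * ‖x‖ * ‖y‖ := by
    intro w x y
    rw [norm_mul, norm_mul, Complex.norm_real, Real.norm_eq_abs]
  -- the pointwise weighted bound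
  have hterm : ∀ n η : ℤ,
      b n ^ (s₁ + s₂) * ‖(ω (η, n - η) : ℂ) * ahat η * uhat (n - η)‖ ≤
        K * (f η * G (n - η)) := by
    intro n η
    by_cases hω0 : ω (η, n - η) = 0
    · rw [hω0]
      simp only [Complex.ofReal_zero, zero_mul, norm_zero, mul_zero]
      positivity
    rcases hωsupp η (n - η) hω0 with h00 | ⟨h1, h2⟩
    · have hη0 : η = 0 := congrArg Prod.fst h00
      have hξ0 : n - η = 0 := congrArg Prod.snd h00
      have hn0 : n = 0 := by omega
      subst hη0; subst hn0
      have hb00 : b (0 : ℤ) = 1 := by simp [hb_def]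
      have hω1 := hωle ((0 : ℤ), (0 : ℤ))
      rw [hnormterm]
      simp only [sub_zero]
      show b (0:ℤ) ^ (s₁ + s₂) * (|ω ((0:ℤ), (0:ℤ))| * ‖ahat 0‖ * ‖uhat 0‖) ≤
        K * ((b (0:ℤ) ^ s₁ * ‖ahat 0‖) * (b (0:ℤ) ^ s₂ * ‖uhat 0‖))
      rw [hb00, Real.one_rpow, Real.one_rpow, Real.one_rpow, one_mul, one_mul, one_mul]
      have hau : 0 ≤ ‖ahat 0‖ * ‖uhat 0‖ := mul_nonneg (norm_nonneg _) (norm_nonneg _)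
      calc |ω ((0:ℤ), (0:ℤ))| * ‖ahat 0‖ * ‖uhat 0‖
          = |ω ((0:ℤ), (0:ℤ))| * (‖ahat 0‖ * ‖uhat 0‖) := by ring
        _ ≤ 1 * (‖ahat 0‖ * ‖uhat 0‖) := mul_le_mul_of_nonneg_right hω1 hau
        _ = ‖ahat 0‖ * ‖uhat 0‖ := one_mul _
        _ ≤ K * (‖ahat 0‖ * ‖uhat 0‖) := le_mul_of_one_le_left hau hK1
    · set ξ : ℤ := n - η with hξ_def
      have hbξη : b ξ ≤ b η / ε' := by
        rw [le_div_iff₀ hε'0]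
        calc b ξ * ε' = ε' * b ξ := mul_comm _ _
          _ ≤ |(η : ℝ)| := h1.le
          _ ≤ b η := le_max_right _ _
      have hbηξ : b η ≤ b ξ / ε' := by
        refine max_le ?_ h2.le
        rw [le_div_iff₀ hε'0]
        have := hb1 ξ
        linarith
      have hinv1 : (1 : ℝ) ≤ ε'⁻¹ := (one_le_inv₀ hε'0).mpr hε'1.le
      have habs : |(n : ℝ)| ≤ b η + b ξ := by
        have hcast : ((n : ℝ)) = (η : ℝ) + (ξ : ℝ) := by
          rw [hξ_def]; push_cast; ring
        rw [hcast]
        calc |(η : ℝ) + (ξ : ℝ)| ≤ |(η : ℝ)| + |(ξ : ℝ)| := abs_add_le _ _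
          _ ≤ b η + b ξ := add_le_add (le_max_right _ _) (le_max_right _ _)
      have hstep : ∀ m : ℤ, b m + b m / ε' ≤ 2 / ε' * b m := by
        intro m
        have h5 : b m * 1 ≤ b m * ε'⁻¹ :=
          mul_le_mul_of_nonneg_left hinv1 (hb0 m).le
        calc b m + b m / ε' = b m * 1 + b m * ε'⁻¹ := by
              rw [mul_one, div_eq_mul_inv]
          _ ≤ b m * ε'⁻¹ + b m * ε'⁻¹ := by linarith
          _ = 2 / ε' * b m := by rw [div_eq_mul_inv]; ring
      have hone : ∀ m : ℤ, (1 : ℝ) ≤ 2 / ε' * b m := by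
        intro m
        have := mul_le_mul h2ε (hb1 m) zero_le_one h2ε0.le
        linarith
      have hnη : b n ≤ 2 / ε' * b η := by
        refine max_le (hone η) ?_
        calc |(n : ℝ)| ≤ b η + b ξ := habs
          _ ≤ b η + b η / ε' := by linarith
          _ ≤ 2 / ε' * b η := hstep η
      have hnξ : b n ≤ 2 / ε' * b ξ := by
        refine max_le (hone ξ) ?_
        calc |(n : ℝ)| ≤ b η + b ξ := habs
          _ ≤ b ξ / ε' + b ξ := by linarith
          _ ≤ 2 / ε' * b ξ := by linarith [hstep ξ]
      have e1 : b n ^ (s₁ + s₂) = b n ^ s₁ * b n ^ s₂ := Real.rpow_add (hb0 n) _ _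
      have e2 : b n ^ s₁ ≤ (2 / ε') ^ s₁ * b η ^ s₁ := by
        rw [← Real.mul_rpow h2ε0.le (hb0 η).le]
        exact Real.rpow_le_rpow (hb0 n).le hnη hs₁
      have e3 : b n ^ s₂ ≤ (2 / ε') ^ s₂ * b ξ ^ s₂ := by
        rw [← Real.mul_rpow h2ε0.le (hb0 ξ).le]
        exact Real.rpow_le_rpow (hb0 n).le hnξ hs₂
      have eK : K = (2 / ε') ^ s₁ * (2 / ε') ^ s₂ := by
        rw [hK_def, Real.rpow_add h2ε0]
      rw [hnormterm, e1]
      have hω1 : |ω (η, ξ)| ≤ 1 := hωle _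
      calc b n ^ s₁ * b n ^ s₂ * (|ω (η, ξ)| * ‖ahat η‖ * ‖uhat ξ‖)
          ≤ ((2 / ε') ^ s₁ * b η ^ s₁) * ((2 / ε') ^ s₂ * b ξ ^ s₂) *
            (1 * ‖ahat η‖ * ‖uhat ξ‖) := by
            gcongr <;> first | exact e2 | exact e3 | exact hω1
        _ = K * (f η * G ξ) := by
            rw [eK, hf_def, hG_def]; ring
  -- norm bound without weights
  have hnormle : ∀ n η : ℤ,
      ‖(ω (η, n - η) : ℂ) * ahat η * uhat (n - η)‖ ≤ f η * G (n - η) := by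
    intro n η
    rw [hnormterm]
    have ha : ‖ahat η‖ ≤ f η := by
      have h1 := Real.one_le_rpow (hb1 η) hs₁
      calc ‖ahat η‖ = 1 * ‖ahat η‖ := (one_mul _).symm
        _ ≤ b η ^ s₁ * ‖ahat η‖ := mul_le_mul_of_nonneg_right h1 (norm_nonneg _)
    have hu : ‖uhat (n - η)‖ ≤ G (n - η) := by
      have h1 := Real.one_le_rpow (hb1 (n - η)) hs₂
      calc ‖uhat (n - η)‖ = 1 * ‖uhat (n - η)‖ := (one_mul _).symm
        _ ≤ b (n - η) ^ s₂ * ‖uhat (n - η)‖ := mul_le_mul_of_nonneg_right h1 (norm_nonneg _)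
    calc |ω (η, n - η)| * ‖ahat η‖ * ‖uhat (n - η)‖
        ≤ 1 * ‖ahat η‖ * ‖uhat (n - η)‖ := by
          have := hωle (η, n - η)
          gcongr
      _ = ‖ahat η‖ * ‖uhat (n - η)‖ := by ring
      _ ≤ f η * G (n - η) := mul_le_mul ha hu (norm_nonneg _) (hfnn η)
  have hsn : ∀ n : ℤ, Summable (fun η => f η * G (n - η)) := by
    intro n
    refine Summable.of_nonneg_of_le (fun η => mul_nonneg (hfnn η) (hGnn _))
      (fun η => ?_) (hf_sum.mul_right M)
    exact mul_le_mul_of_nonneg_left (hGM _) (hfnn η)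
  have htermsum : ∀ n : ℤ,
      Summable (fun η => ‖(ω (η, n - η) : ℂ) * ahat η * uhat (n - η)‖) := fun n =>
    Summable.of_nonneg_of_le (fun η => norm_nonneg _) (fun η => hnormle n η) (hsn n)
  set h : ℤ → ℝ := fun n => ∑' η : ℤ, f η * G (n - η) with hh_def
  have hhnn : ∀ n, 0 ≤ h n := fun n =>
    tsum_nonneg fun η => mul_nonneg (hfnn η) (hGnn _)
  have hRn : ∀ n : ℤ,
      b n ^ (s₁ + s₂) * ‖∑' η : ℤ, (ω (η, n - η) : ℂ) * ahat η * uhat (n - η)‖ ≤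
        K * h n := by
    intro n
    calc b n ^ (s₁ + s₂) * ‖∑' η : ℤ, (ω (η, n - η) : ℂ) * ahat η * uhat (n - η)‖
        ≤ b n ^ (s₁ + s₂) * ∑' η : ℤ, ‖(ω (η, n - η) : ℂ) * ahat η * uhat (n - η)‖ :=
          mul_le_mul_of_nonneg_left (norm_tsum_le_tsum_norm (htermsum n))
            (Real.rpow_nonneg (hb0 n).le _)
      _ = ∑' η : ℤ, b n ^ (s₁ + s₂) * ‖(ω (η, n - η) : ℂ) * ahat η * uhat (n - η)‖ :=
          tsum_mul_left.symm
      _ ≤ ∑' η : ℤ, K * (f η * G (n - η)) :=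
          Summable.tsum_le_tsum (fun η => hterm n η) ((htermsum n).mul_left _) ((hsn n).mul_left K)
      _ = K * h n := tsum_mul_left
  have htarg : ∀ n : ℤ,
      b n ^ (2 * (s₁ + s₂)) *
        ‖∑' η : ℤ, (ω (η, n - η) : ℂ) * ahat η * uhat (n - η)‖ ^ 2 ≤
      K ^ 2 * h n ^ 2 := by
    intro n
    rw [ParaprodAux.rpow_two_mul (hb0 n).le, ← mul_pow, ← mul_pow]
    exact pow_le_pow_left₀
      (mul_nonneg (Real.rpow_nonneg (hb0 n).le _) (norm_nonneg _)) (hRn n) 2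
  -- pass to ENNReal for the convolution estimate
  set φ : ℤ → ℝ≥0∞ := fun η => ENNReal.ofReal (f η) with hφ_def
  set γ : ℤ → ℝ≥0∞ := fun ξ => ENNReal.ofReal (G ξ) with hγ_def
  have hofh : ∀ n : ℤ, ENNReal.ofReal (h n ^ 2) = (∑' η : ℤ, φ η * γ (n - η)) ^ 2 := by
    intro n
    rw [ENNReal.ofReal_pow (hhnn n) 2]
    congr 1
    rw [hh_def]
    rw [ENNReal.ofReal_tsum_of_nonneg (fun η => mul_nonneg (hfnn η) (hGnn _)) (hsn n)]
    exact tsum_congr fun η => ENNReal.ofReal_mul (hfnn η)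
  have hPhi : ∑' η : ℤ, φ η = ENNReal.ofReal (∑' η : ℤ, f η) :=
    (ENNReal.ofReal_tsum_of_nonneg hfnn hf_sum).symm
  have hGam : ∑' ξ : ℤ, γ ξ ^ 2 = ENNReal.ofReal NU := by
    rw [hNU_def, ENNReal.ofReal_tsum_of_nonneg (fun ξ => sq_nonneg _) hGsq]
    exact tsum_congr fun ξ => (ENNReal.ofReal_pow (hGnn ξ) 2).symm
  have hEbound : ∑' n : ℤ, ENNReal.ofReal (h n ^ 2) ≤
      ENNReal.ofReal (2 * ((∑' η : ℤ, f η) ^ 2 * NU)) := by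
    calc ∑' n : ℤ, ENNReal.ofReal (h n ^ 2)
        = ∑' n : ℤ, (∑' η : ℤ, φ η * γ (n - η)) ^ 2 := tsum_congr hofh
      _ ≤ 2 * ((∑' η, φ η) ^ 2 * (∑' ξ, γ ξ ^ 2)) := ParaprodAux.conv φ γ
      _ = ENNReal.ofReal (2 * ((∑' η : ℤ, f η) ^ 2 * NU)) := by
          rw [hPhi, hGam,
            ENNReal.ofReal_mul (by norm_num : (0:ℝ) ≤ 2),
            ENNReal.ofReal_mul (sq_nonneg (∑' η : ℤ, f η)),
            ENNReal.ofReal_pow (tsum_nonneg hfnn), ENNReal.ofReal_ofNat]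
  have hh2sum : Summable (fun n : ℤ => h n ^ 2) :=
    ParaprodAux.summable_of_ofReal (fun n => sq_nonneg _)
      (ne_top_of_le_ne_top ENNReal.ofReal_ne_top hEbound)
  have hRHSnn : (0:ℝ) ≤ 2 * ((∑' η : ℤ, f η) ^ 2 * NU) :=
    mul_nonneg (by norm_num) (mul_nonneg (sq_nonneg _) hNU0)
  have hh2le : ∑' n : ℤ, h n ^ 2 ≤ 2 * ((∑' η : ℤ, f η) ^ 2 * NU) := by
    rw [← ENNReal.ofReal_le_ofReal_iff hRHSnn,
      ENNReal.ofReal_tsum_of_nonneg (fun n => sq_nonneg _) hh2sum]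
    exact hEbound
  -- Cauchy-Schwarz for ∑ f
  have hfCS : (∑' η : ℤ, f η) ^ 2 ≤ 2 * (S * NA) := by
    have hRnn : (0:ℝ) ≤ 2 * (S * NA) :=
      mul_nonneg (by norm_num) (mul_nonneg hS0 hNA0)
    rw [← ENNReal.ofReal_le_ofReal_iff hRnn,
      ENNReal.ofReal_pow (tsum_nonneg hfnn),
      ENNReal.ofReal_tsum_of_nonneg hfnn hf_sum]
    have hof : ∀ η : ℤ, ENNReal.ofReal (f η) =
        ENNReal.ofReal ((b η)⁻¹) * ENNReal.ofReal (F η) := fun η => by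
      rw [← ENNReal.ofReal_mul (inv_nonneg.mpr (hb0 η).le), ← hf_eq η]
    calc (∑' η : ℤ, ENNReal.ofReal (f η)) ^ 2
        = (∑' η : ℤ, ENNReal.ofReal ((b η)⁻¹) * ENNReal.ofReal (F η)) ^ 2 := by
          rw [tsum_congr hof]
      _ ≤ 2 * ((∑' η : ℤ, ENNReal.ofReal ((b η)⁻¹) ^ 2) *
            (∑' η : ℤ, ENNReal.ofReal (F η) ^ 2)) :=
          ParaprodAux.cs _ _
      _ = ENNReal.ofReal (2 * (S * NA)) := by
          have e1 : ∑' η : ℤ, ENNReal.ofReal ((b η)⁻¹) ^ 2 = ENNReal.ofReal S := by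
            rw [hS_def, ENNReal.ofReal_tsum_of_nonneg (fun η => sq_nonneg _) hSsum]
            exact tsum_congr fun η => (ENNReal.ofReal_pow (inv_nonneg.mpr (hb0 η).le) 2).symm
          have e2 : ∑' η : ℤ, ENNReal.ofReal (F η) ^ 2 = ENNReal.ofReal NA := by
            rw [hNA_def, ENNReal.ofReal_tsum_of_nonneg (fun η => sq_nonneg _) hFsq]
            exact tsum_congr fun η => (ENNReal.ofReal_pow (hFnn η) 2).symm
          rw [e1, e2, ENNReal.ofReal_mul (by norm_num : (0:ℝ) ≤ 2),
            ENNReal.ofReal_mul hS0, ENNReal.ofReal_ofNat]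
  -- final assembly
  have htargsum : Summable (fun n : ℤ => (max 1 |(n : ℝ)|) ^ (2 * (s₁ + s₂)) *
      ‖∑' η : ℤ, (ω (η, n - η) : ℂ) * ahat η * uhat (n - η)‖ ^ 2) := by
    refine Summable.of_nonneg_of_le (fun n => ?_) (fun n => htarg n) (hh2sum.mul_left (K ^ 2))
    exact mul_nonneg (Real.rpow_nonneg (hb0 n).le _) (pow_nonneg (norm_nonneg _) 2)
  refine ⟨htargsum, ?_⟩
  have hfinal : ∑' n : ℤ, (max 1 |(n : ℝ)|) ^ (2 * (s₁ + s₂)) *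
      ‖∑' η : ℤ, (ω (η, n - η) : ℂ) * ahat η * uhat (n - η)‖ ^ 2 ≤
      (2 * K * Real.sqrt S) ^ 2 * (NA * NU) := by
    have hC2 : (2 * K * Real.sqrt S) ^ 2 = 4 * K ^ 2 * S := by
      rw [mul_pow, mul_pow, Real.sq_sqrt hS0]; ring
    calc ∑' n : ℤ, (max 1 |(n : ℝ)|) ^ (2 * (s₁ + s₂)) *
          ‖∑' η : ℤ, (ω (η, n - η) : ℂ) * ahat η * uhat (n - η)‖ ^ 2
        ≤ ∑' n : ℤ, K ^ 2 * h n ^ 2 :=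
          Summable.tsum_le_tsum (fun n => htarg n) htargsum (hh2sum.mul_left _)
      _ = K ^ 2 * ∑' n : ℤ, h n ^ 2 := tsum_mul_left
      _ ≤ K ^ 2 * (2 * ((∑' η : ℤ, f η) ^ 2 * NU)) :=
          mul_le_mul_of_nonneg_left hh2le (sq_nonneg K)
      _ = K ^ 2 * (2 * ((∑' η : ℤ, f η) ^ 2 * NU)) := rfl
      _ ≤ K ^ 2 * (2 * ((2 * (S * NA)) * NU)) :=
          mul_le_mul_of_nonneg_left
            (mul_le_mul_of_nonneg_left (mul_le_mul_of_nonneg_right hfCS hNU0)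
              (by norm_num)) (sq_nonneg K)
      _ = (2 * K * Real.sqrt S) ^ 2 * (NA * NU) := by rw [hC2]; ring
  have eA : (∑' η : ℤ, (max 1 |(η : ℝ)|) ^ (2 * (s₁ + 1)) * ‖ahat η‖ ^ 2) = NA :=
    tsum_congr hFsq_eq
  have eU : (∑' ξ : ℤ, (max 1 |(ξ : ℝ)|) ^ (2 * s₂) * ‖uhat ξ‖ ^ 2) = NU :=
    tsum_congr hGsq_eq
  rw [eA, eU]
  calc Real.sqrt (∑' n : ℤ, (max 1 |(n : ℝ)|) ^ (2 * (s₁ + s₂)) *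
        ‖∑' η : ℤ, (ω (η, n - η) : ℂ) * ahat η * uhat (n - η)‖ ^ 2)
      ≤ Real.sqrt ((2 * K * Real.sqrt S) ^ 2 * (NA * NU)) := Real.sqrt_le_sqrt hfinal
    _ = 2 * K * Real.sqrt S * Real.sqrt NA * Real.sqrt NU := by
        rw [Real.sqrt_mul (sq_nonneg _), Real.sqrt_sq hCpos.le, Real.sqrt_mul hNA0]
        ring
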